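/- Let γ₁, …, γ_N ∈ (0, π) and suppose there exist integers k₁, …, k_N with ∑ kᵢγᵢ ≡ 0 (mod 2π) and ∑ kᵢ odd. Then for every integer ℓ, max over 1 ≤ i ≤ N of the distance from ℓγᵢ to π modulo 2π is at least π / (∑ |kᵢ|). -/

import Mathlib

open Real

/-- If `∑ kᵢ γᵢ ≡ 0 (mod 2π)` with `∑ kᵢ` odd, then for every integer `ℓ` the
largest distance of the `ℓ γᵢ` to the odd multiples of `π` is at least
`π / ∑ |kᵢ|`. -/
theorem max_dist_to_pi_lower_bound {N : ℕ} (hN : 0 < N) (γ : Fin N → ℝ)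
    (hγ : ∀ i, γ i ∈ Set.Ioo 0 π) (k : Fin N → ℤ) (M : ℤ)
    (hrel : ∑ i, (k i : ℝ) * γ i = 2 * π * M) (hodd : Odd (∑ i, k i))
    (ℓ : ℤ) :
    π / (∑ i, |(k i : ℝ)|) ≤
      ⨆ i, ⨅ n : ℤ, |(ℓ : ℝ) * γ i - (2 * (n : ℝ) + 1) * π| := by
  haveI : Nonempty (Fin N) := ⟨⟨0, hN⟩⟩
  have hπ := Real.pi_pos
  have h2π : (0:ℝ) < 2 * π := by linarith
  set y : Fin N → ℝ := fun i => ((ℓ : ℝ) * γ i - π) / (2 * π) with hy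
  set m : Fin N → ℤ := fun i => round (y i) with hm
  have habs : ∀ (i : Fin N) (n : ℤ),
      |(ℓ : ℝ) * γ i - (2 * (n : ℝ) + 1) * π| = 2 * π * |y i - n| := by
    intro i n
    have : (ℓ : ℝ) * γ i - (2 * (n : ℝ) + 1) * π = 2 * π * (y i - n) := by
      have hne : (2 * π) ≠ 0 := ne_of_gt h2π
      simp only [hy]
      field_simp [hy]
      ring
    rw [this, abs_mul, abs_of_pos h2π]
  have hroundmin : ∀ (x : ℝ) (n : ℤ), |x - round x| ≤ |x - n| := by
    intro x n
    rcases eq_or_ne n (round x) with h | h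
    · rw [h]
    · have hne : round x - n ≠ 0 := sub_ne_zero.mpr (fun h' => h h'.symm)
      have h2 : (1:ℝ) ≤ |((round x - n : ℤ) : ℝ)| := by
        exact_mod_cast Int.one_le_abs hne
      have h1 : (1:ℝ) ≤ |(round x : ℝ) - (n:ℝ)| := by push_cast at h2; exact h2
      have tri : |(round x : ℝ) - n| ≤ |(round x:ℝ) - x| + |x - n| := abs_sub_le _ _ _
      have hr : |x - round x| ≤ 1/2 := abs_sub_round x
      have hc : |(round x:ℝ) - x| = |x - round x| := abs_sub_comm _ _
      linarith
  set f : Fin N → ℝ := fun i => ⨅ n : ℤ, |(ℓ : ℝ) * γ i - (2 * (n : ℝ) + 1) * π| with hf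
  have hbdd : ∀ i, BddBelow (Set.range fun n : ℤ =>
      |(ℓ : ℝ) * γ i - (2 * (n : ℝ) + 1) * π|) := by
    intro i; exact ⟨0, by rintro x ⟨n, rfl⟩; positivity⟩
  have he_le_f : ∀ i, 2 * π * |y i - m i| ≤ f i := by
    intro i
    apply le_ciInf
    intro n
    rw [habs]
    exact mul_le_mul_of_nonneg_left (hroundmin (y i) n) (le_of_lt h2π)
  have hf_le : ∀ i, f i ≤ π := by
    intro i
    refine (ciInf_le (hbdd i) (m i)).trans ?_
    rw [habs]
    have := abs_sub_round (y i)
    nlinarith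
  have hDbdd : BddAbove (Set.range f) := ⟨π, by rintro x ⟨i, rfl⟩; exact hf_le i⟩
  have heD : ∀ i, |(ℓ : ℝ) * γ i - (2 * (m i : ℝ) + 1) * π| ≤ ⨆ i, f i := by
    intro i
    rw [habs]
    exact (he_le_f i).trans (le_ciSup hDbdd i)
  set S : ℤ := ∑ i, k i * (2 * m i + 1) with hS
  have hE : ∑ i, (k i : ℝ) * ((ℓ:ℝ) * γ i - (2 * (m i:ℝ) + 1) * π)
      = π * (2 * M * ℓ - S) := by
    have step : ∀ i ∈ Finset.univ, (k i : ℝ) * ((ℓ:ℝ) * γ i - (2 * (m i:ℝ) + 1) * π)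
        = (ℓ:ℝ) * ((k i:ℝ) * γ i) - π * ((k i : ℝ) * (2*(m i:ℝ)+1)) := by
      intro i _; ring
    rw [Finset.sum_congr rfl step, Finset.sum_sub_distrib, ← Finset.mul_sum,
      ← Finset.mul_sum, hrel, hS]
    push_cast
    ring
  have hSodd : Odd S := by
    have hrw : S = ∑ i, k i + 2 * ∑ i, k i * m i := by
      rw [hS, Finset.mul_sum, ← Finset.sum_add_distrib]
      exact Finset.sum_congr rfl fun i _ => by ring
    rw [hrw]
    exact hodd.add_even (even_two_mul _)
  have hTodd : Odd (2 * M * ℓ - S) := by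
    exact (Even.sub_odd (by exact ⟨M * ℓ, by ring⟩) hSodd)
  have hT1 : (1:ℝ) ≤ |((2 * M * ℓ - S : ℤ) : ℝ)| := by
    have : 2 * M * ℓ - S ≠ 0 := by
      intro h; rw [h] at hTodd; exact (Int.not_odd_iff_even.mpr Even.zero) hTodd
    exact_mod_cast Int.one_le_abs this
  have hπE : π ≤ |∑ i, (k i : ℝ) * ((ℓ:ℝ) * γ i - (2 * (m i:ℝ) + 1) * π)| := by
    rw [hE, abs_mul, abs_of_pos hπ]
    have : ((2 * M * ℓ : ℤ) : ℝ) - (S : ℝ) = ((2 * M * ℓ - S : ℤ) : ℝ) := by push_cast; ring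
    push_cast
    push_cast at hT1
    nlinarith
  have hD0 : 0 ≤ ⨆ i, f i := by
    refine le_trans ?_ (le_ciSup hDbdd (Classical.arbitrary (Fin N)))
    exact le_ciInf fun n => abs_nonneg _
  have hEbound : |∑ i, (k i : ℝ) * ((ℓ:ℝ) * γ i - (2 * (m i:ℝ) + 1) * π)|
      ≤ (∑ i, |(k i:ℝ)|) * ⨆ i, f i := by
    calc |∑ i, (k i : ℝ) * ((ℓ:ℝ) * γ i - (2 * (m i:ℝ) + 1) * π)|
        ≤ ∑ i, |(k i : ℝ) * ((ℓ:ℝ) * γ i - (2 * (m i:ℝ) + 1) * π)| :=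
          Finset.abs_sum_le_sum_abs _ _
      _ = ∑ i, |(k i:ℝ)| * |(ℓ:ℝ) * γ i - (2 * (m i:ℝ) + 1) * π| := by
          simp [abs_mul]
      _ ≤ ∑ i, |(k i:ℝ)| * ⨆ i, f i :=
          Finset.sum_le_sum fun i _ =>
            mul_le_mul_of_nonneg_left (heD i) (abs_nonneg _)
      _ = (∑ i, |(k i:ℝ)|) * ⨆ i, f i := by rw [← Finset.sum_mul]
  have hK1 : (1:ℝ) ≤ ∑ i, |(k i:ℝ)| := by
    have h0 : (∑ i, k i) ≠ 0 := by
      intro h; rw [h] at hodd; exact (Int.not_odd_iff_even.mpr Even.zero) hodd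
    have h1 : 1 ≤ |∑ i, k i| := Int.one_le_abs h0
    have h2 : |∑ i, k i| ≤ ∑ i, |k i| := Finset.abs_sum_le_sum_abs _ _
    calc (1:ℝ) ≤ ((∑ i, |k i| : ℤ):ℝ) := by exact_mod_cast h1.trans h2
      _ = ∑ i, |(k i:ℝ)| := by push_cast; rfl
  rw [div_le_iff₀ (lt_of_lt_of_le one_pos hK1)]
  calc π ≤ (∑ i, |(k i:ℝ)|) * ⨆ i, f i := hπE.trans hEbound
    _ = (⨆ i, f i) * ∑ i, |(k i:ℝ)| := mul_comm _ _
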